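/- If I is an α-prime hyperideal of R and S is a nonempty subset of R, then the quotient (I : S) = {r ∈ R : r∘S ⊆ I} is an α-prime hyperideal of R (provided it is proper). -/
import Mathlib


open Pointwise

namespace HyperPaper

/-- A commutative multiplicative hyperring on an additive commutative group:
the hypermultiplication is associative, commutative, subdistributive over `+`,
and compatible with negation. -/
structure MulHyperring (R : Type*) [AddCommGroup R] where
  hmul : R → R → Set R
  nonempty : ∀ a b, (hmul a b).Nonempty
  comm : ∀ a b, hmul a b = hmul b a
  assoc : ∀ a b c, (⋃ t ∈ hmul a b, hmul t c) = ⋃ t ∈ hmul b c, hmul a t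
  distrib : ∀ a b c, hmul a (b + c) ⊆ hmul a b + hmul a c
  hmul_neg : ∀ a b, hmul a (-b) = -(hmul a b)

variable {R : Type*} [AddCommGroup R]

/-- Product of two subsets under the hyperoperation. -/
def MulHyperring.setMul (H : MulHyperring R) (A B : Set R) : Set R :=
  ⋃ a ∈ A, ⋃ b ∈ B, H.hmul a b

/-- `H.hpow a n` is the `(n+1)`-fold hyperproduct `a ∘ a ∘ ⋯ ∘ a`. -/
def MulHyperring.hpow (H : MulHyperring R) (a : R) : ℕ → Set R
  | 0 => {a}
  | n + 1 => H.setMul {a} (H.hpow a n)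

/-- `H.hprod a l` is the hyperproduct of the list `a :: l`. -/
def MulHyperring.hprod (H : MulHyperring R) (a : R) : List R → Set R
  | [] => {a}
  | b :: l => H.setMul {a} (H.hprod b l)

/-- A hyperideal: an additive subgroup absorbing hypermultiplication. -/
structure Hyperideal (H : MulHyperring R) where
  carrier : Set R
  zero_mem : (0 : R) ∈ carrier
  sub_mem : ∀ a b, a ∈ carrier → b ∈ carrier → a - b ∈ carrier
  absorb : ∀ r x, x ∈ carrier → H.hmul r x ⊆ carrier

/-- A C-hyperideal: any finite hyperproduct meeting it is contained in it. -/
def IsCHyperideal (H : MulHyperring R) (I : Hyperideal H) : Prop :=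
  ∀ a (l : List R), (H.hprod a l ∩ I.carrier).Nonempty → H.hprod a l ⊆ I.carrier

/-- A good homomorphism between multiplicative hyperrings. -/
def IsGoodHom {R₁ R₂ : Type*} [AddCommGroup R₁] [AddCommGroup R₂]
    (H₁ : MulHyperring R₁) (H₂ : MulHyperring R₂) (f : R₁ → R₂) : Prop :=
  (∀ x y, f (x + y) = f x + f y) ∧ ∀ x y, f '' H₁.hmul x y = H₂.hmul (f x) (f y)

/-- A good endomorphism. -/
def IsGoodEndo (H : MulHyperring R) (α : R → R) : Prop :=
  IsGoodHom H H α

/-- A proper hyperideal `I` is `α`-prime if `x ∘ y ⊆ I` implies `x ∈ I` or `α y ∈ I`. -/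
def IsAlphaPrime (H : MulHyperring R) (α : R → R) (I : Hyperideal H) : Prop :=
  I.carrier ≠ Set.univ ∧
    ∀ x y, H.hmul x y ⊆ I.carrier → x ∈ I.carrier ∨ α y ∈ I.carrier

/-- A proper hyperideal `I` is prime if `x ∘ y ⊆ I` implies `x ∈ I` or `y ∈ I`. -/
def IsPrime (H : MulHyperring R) (I : Hyperideal H) : Prop :=
  I.carrier ≠ Set.univ ∧
    ∀ x y, H.hmul x y ⊆ I.carrier → x ∈ I.carrier ∨ y ∈ I.carrier

/-- The radical `√S = {r | rⁿ ⊆ S for some n}`. -/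
def radical (H : MulHyperring R) (S : Set R) : Set R :=
  {r | ∃ n : ℕ, H.hpow r n ⊆ S}

/-- The `α`-radical `ᵅ√S = {r | α(rⁿ) ⊆ S for some n}`. -/
def alphaRad (H : MulHyperring R) (α : R → R) (S : Set R) : Set R :=
  {r | ∃ n : ℕ, α '' H.hpow r n ⊆ S}

/-- The set of `α`-nilpotent elements. -/
def nilAlpha (H : MulHyperring R) (α : R → R) : Set R :=
  {x | ∃ n : ℕ, (0 : R) ∈ α '' H.hpow x n}

/-- The `n`-fold set power of a hyperideal carrier: `idealPow H S n = S^(n+1)`. -/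
def idealPow (H : MulHyperring R) (S : Set R) : ℕ → Set R
  | 0 => S
  | n + 1 => H.setMul S (idealPow H S n)

end HyperPaper

open HyperPaper

/-- If `I` is `α`-prime and `S` nonempty, then `(I : S)` is an
`α`-prime hyperideal (provided it is proper). -/
theorem stmt5 {R : Type*} [AddCommGroup R] (H : MulHyperring R) (α : R → R)
    (hα : IsGoodEndo H α) (I : Hyperideal H) (hp : IsAlphaPrime H α I)
    (S : Set R) (hS : S.Nonempty)
    (hproper : {r : R | ∀ s ∈ S, H.hmul r s ⊆ I.carrier} ≠ Set.univ) :
    ∃ J : Hyperideal H, J.carrier = {r : R | ∀ s ∈ S, H.hmul r s ⊆ I.carrier} ∧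
      IsAlphaPrime H α J := by

  classical
  set Q : Set R := {r : R | ∀ s ∈ S, H.hmul r s ⊆ I.carrier} with hQ
  have hIQ : I.carrier ⊆ Q := by
    intro a ha s hs
    rw [H.comm]
    exact I.absorb s a ha
  refine ⟨⟨Q, ?_, ?_, ?_⟩, rfl, ?_, ?_⟩
  · -- zero_mem
    intro s hs x hx
    rw [H.comm] at hx
    exact I.absorb s 0 I.zero_mem hx
  · -- sub_mem
    intro a b ha hb s hs x hx
    rw [H.comm] at hx
    have hsub : H.hmul s (a - b) ⊆ H.hmul s a + -(H.hmul s b) := by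
      rw [sub_eq_add_neg]
      have := H.distrib s a (-b)
      rwa [H.hmul_neg] at this
    obtain ⟨u, hu, v, hv, rfl⟩ := hsub hx
    rw [Set.mem_neg] at hv
    have hu' : u ∈ I.carrier := by
      have := ha s hs; rw [H.comm] at this; exact this hu
    have hv'' : -v ∈ I.carrier := by
      have := hb s hs; rw [H.comm] at this; exact this hv
    have := I.sub_mem u (-v) hu' hv''
    rwa [sub_eq_add_neg, neg_neg] at this
  · -- absorb
    intro r x hx y hy s hs z hz
    have hmem : z ∈ ⋃ t ∈ H.hmul r x, H.hmul t s :=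
      Set.mem_biUnion hy hz
    rw [H.assoc] at hmem
    obtain ⟨t, ht, hzt⟩ : ∃ t ∈ H.hmul x s, z ∈ H.hmul r t := by
      simpa using hmem
    exact I.absorb r t (hx s hs ht) hzt
  · exact hproper
  · -- primeness
    intro x y hxy
    by_cases hya : α y ∈ I.carrier
    · exact Or.inr (hIQ hya)
    · left
      intro s hs t ht
      have hty : H.hmul t y ⊆ I.carrier := by
        intro w hw
        have hmem : w ∈ ⋃ u ∈ H.hmul x s, H.hmul y u := by
          refine Set.mem_biUnion ht ?_
          rw [H.comm] at hw; exact hw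
        rw [← H.assoc] at hmem
        obtain ⟨u, hu, hwu⟩ : ∃ u ∈ H.hmul y x, w ∈ H.hmul u s := by
          simpa using hmem
        rw [H.comm] at hu
        exact hxy hu s hs hwu
      rcases hp.2 t y hty with h | h
      · exact h
      · exact absurd h hya
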